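/- For gamma-distributed resetting with density f_σ(t) = 4r² t e^{−2rt} (t > 0) and diffusive first passage distribution F_τ(t) = erfc(√(L²/(4Dt))), the success probability satisfies p = ∫₀^∞ erfc(√(L²/(4Dt))) · 4r² t e^{−2rt} dt = e^{−√(2rL²/D)} (1 + √(rL²/(2D))). -/

import Mathlib

open MeasureTheory Real

section AuxLemmas
open Set

/-- Inversion substitution u ↦ b/u on (0,∞). -/
lemma inv_subst {b : ℝ} (hb : 0 < b) (g : ℝ → ℝ) :
    ∫ u in Ioi (0:ℝ), (b / u ^ 2) * g (b / u) = ∫ u in Ioi (0:ℝ), g u := by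
  have himg : (fun u => b / u) '' Ioi (0:ℝ) = Ioi 0 := by
    ext y
    constructor
    · rintro ⟨u, hu, rfl⟩; exact div_pos hb hu
    · intro hy; exact ⟨b / y, div_pos hb hy, by field_simp⟩
  have hderiv : ∀ x ∈ Ioi (0:ℝ), HasDerivWithinAt (fun u => b / u) (-(b / x ^ 2)) (Ioi 0) x := by
    intro x hx
    have : HasDerivAt (fun u => b / u) (-(b / x ^ 2)) x := by
      simpa [div_eq_mul_inv, mul_comm] using ((hasDerivAt_inv (ne_of_gt hx)).const_mul b)
    exact this.hasDerivWithinAt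
  have hinj : InjOn (fun u => b / u) (Ioi (0:ℝ)) := by
    intro x hx y hy h
    have hx0 : (0:ℝ) < x := hx
    have hy0 : (0:ℝ) < y := hy
    rw [div_eq_div_iff (ne_of_gt hx0) (ne_of_gt hy0)] at h
    exact mul_left_cancel₀ (ne_of_gt hb) h.symm
  have := integral_image_eq_integral_abs_deriv_smul measurableSet_Ioi hderiv hinj g
  rw [himg] at this
  rw [this]
  apply setIntegral_congr_fun measurableSet_Ioi
  intro x hx
  have hx0 : (0:ℝ) < x := hx
  have hx2 : (0:ℝ) < x ^ 2 := by positivity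
  simp [abs_of_pos (div_pos hb hx2), smul_eq_mul]

lemma inv_subst_integrable {b : ℝ} (hb : 0 < b) (g : ℝ → ℝ) :
    IntegrableOn g (Ioi (0:ℝ)) ↔
      IntegrableOn (fun u => (b / u ^ 2) * g (b / u)) (Ioi (0:ℝ)) := by
  have himg : (fun u => b / u) '' Ioi (0:ℝ) = Ioi 0 := by
    ext y
    constructor
    · rintro ⟨u, hu, rfl⟩; exact div_pos hb hu
    · intro hy; exact ⟨b / y, div_pos hb hy, by field_simp⟩
  have hderiv : ∀ x ∈ Ioi (0:ℝ), HasDerivWithinAt (fun u => b / u) (-(b / x ^ 2)) (Ioi 0) x := by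
    intro x hx
    have : HasDerivAt (fun u => b / u) (-(b / x ^ 2)) x := by
      simpa [div_eq_mul_inv, mul_comm] using ((hasDerivAt_inv (ne_of_gt hx)).const_mul b)
    exact this.hasDerivWithinAt
  have hinj : InjOn (fun u => b / u) (Ioi (0:ℝ)) := by
    intro x hx y hy h
    have hx0 : (0:ℝ) < x := hx
    have hy0 : (0:ℝ) < y := hy
    rw [div_eq_div_iff (ne_of_gt hx0) (ne_of_gt hy0)] at h
    exact mul_left_cancel₀ (ne_of_gt hb) h.symm
  have := integrableOn_image_iff_integrableOn_abs_deriv_smul measurableSet_Ioi hderiv hinj g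
  rw [himg] at this
  rw [this]
  constructor <;> intro h <;> refine h.congr_fun ?_ measurableSet_Ioi <;>
    intro x hx <;>
    · have hx0 : (0:ℝ) < x := hx
      have hx2 : (0:ℝ) < x ^ 2 := by positivity
      simp [abs_of_pos (div_pos hb hx2), smul_eq_mul]


lemma gauss_int : Integrable (fun u : ℝ => Real.exp (-u^2)) := by
  simpa using integrable_exp_neg_mul_sq (one_pos)

section
variable {b : ℝ}

/-- integrability of exp(-(u-b/u)^2) on (0,∞). -/
lemma glasser_integrable (hb : 0 < b) :
    IntegrableOn (fun u => Real.exp (-(u - b/u)^2)) (Ioi (0:ℝ)) := by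
  have hgauss : IntegrableOn (fun u : ℝ => Real.exp (2*b) * Real.exp (-u^2)) (Ioi (0:ℝ)) :=
    (gauss_int.const_mul _).integrableOn
  refine hgauss.mono' ?_ ?_
  · refine ContinuousOn.aestronglyMeasurable ?_ measurableSet_Ioi
    refine (Real.continuous_exp.comp_continuousOn ?_)
    refine ContinuousOn.neg (ContinuousOn.pow ?_ 2)
    exact continuousOn_id.sub (continuousOn_const.div continuousOn_id
      (fun x hx => ne_of_gt hx))
  · filter_upwards [ae_restrict_mem measurableSet_Ioi] with u hu
    have hu0 : (0:ℝ) < u := hu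
    rw [Real.norm_eq_abs, abs_of_pos (Real.exp_pos _), ← Real.exp_add]
    apply Real.exp_le_exp.2
    have h1 : (u - b/u)^2 = u^2 - 2*b + (b/u)^2 := by field_simp; ring
    nlinarith [sq_nonneg (b/u)]
end

section
variable {b : ℝ}

lemma phi_image (hb : 0 < b) : (fun u => u - b/u) '' Ioi (0:ℝ) = univ := by
  apply eq_univ_of_forall
  intro y
  set s := Real.sqrt (y^2 + 4*b) with hs
  have hs2 : s^2 = y^2 + 4*b := Real.sq_sqrt (by nlinarith)
  have hsy : -y < s := by
    nlinarith [Real.sqrt_nonneg (y^2+4*b), sq_nonneg (s + y)]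
  have hu : (0:ℝ) < (y + s)/2 := by linarith
  refine ⟨(y+s)/2, hu, ?_⟩
  have hne : (y+s)/2 ≠ 0 := ne_of_gt hu
  rw [sub_eq_iff_eq_add]
  have hbd : b/((y+s)/2) = (s - y)/2 := by
    rw [div_eq_iff hne]; nlinarith
  rw [hbd]; ring

lemma phi_inj (hb : 0 < b) : InjOn (fun u => u - b/u) (Ioi (0:ℝ)) := by
  intro x hx y hy h
  have hx0 : (0:ℝ) < x := hx
  have hy0 : (0:ℝ) < y := hy
  simp only at h
  have h2 : (x - y) * (x*y + b) = 0 := by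
    have := sub_eq_zero.2 h
    field_simp at this
    nlinarith [this]
  rcases mul_eq_zero.1 h2 with h3 | h3
  · linarith [sub_eq_zero.1 h3]
  · nlinarith

lemma phi_deriv (hb : 0 < b) : ∀ x ∈ Ioi (0:ℝ),
    HasDerivWithinAt (fun u => u - b/u) (1 + b/x^2) (Ioi 0) x := by
  intro x hx
  have hx0 : (0:ℝ) < x := hx
  have h1 : HasDerivAt (fun u : ℝ => b / u) (-(b / x ^ 2)) x := by
    simpa [div_eq_mul_inv, mul_comm] using ((hasDerivAt_inv (ne_of_gt hx0)).const_mul b)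
  exact (((hasDerivAt_id' x).sub h1).congr_deriv (by ring)).hasDerivWithinAt

/-- Glasser: ∫_{0}^∞ e^{-(u-b/u)^2} du = √π/2. -/
lemma glasser (hb : 0 < b) :
    ∫ u in Ioi (0:ℝ), Real.exp (-(u - b/u)^2) = Real.sqrt π / 2 := by
  have key := integral_image_eq_integral_abs_deriv_smul measurableSet_Ioi
    (phi_deriv hb) (phi_inj hb) (fun v => Real.exp (-v^2))
  rw [phi_image hb] at key
  have hgauss : ∫ v in (univ : Set ℝ), Real.exp (-v^2) = Real.sqrt π := by
    rw [Measure.restrict_univ]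
    simpa using integral_gaussian 1
  rw [hgauss] at key
  have hsplit : ∫ u in Ioi (0:ℝ), |1 + b/u^2| • Real.exp (-(u - b/u)^2)
      = (∫ u in Ioi (0:ℝ), Real.exp (-(u - b/u)^2))
        + ∫ u in Ioi (0:ℝ), (b/u^2) * Real.exp (-(u - b/u)^2) := by
    rw [← integral_add (glasser_integrable hb)]
    · apply setIntegral_congr_fun measurableSet_Ioi
      intro u hu
      have hu0 : (0:ℝ) < u := hu
      have hpos : (0:ℝ) < 1 + b/u^2 := by positivity
      dsimp only
      rw [abs_of_pos hpos, smul_eq_mul]; ring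
    · have := (inv_subst_integrable hb (fun u => Real.exp (-(u - b/u)^2))).1
        (glasser_integrable hb)
      refine this.congr_fun ?_ measurableSet_Ioi
      intro u hu
      have hu0 : (0:ℝ) < u := hu
      dsimp only
      have hc : b / (b/u) = u := by field_simp
      rw [hc]
      have : b/u - u = -(u - b/u) := by ring
      rw [this, neg_sq]
  have hsub : ∫ u in Ioi (0:ℝ), (b/u^2) * Real.exp (-(u - b/u)^2)
      = ∫ u in Ioi (0:ℝ), Real.exp (-(u - b/u)^2) := by
    have := inv_subst hb (fun u => Real.exp (-(u - b/u)^2))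
    rw [← this]
    apply setIntegral_congr_fun measurableSet_Ioi
    intro u hu
    have hu0 : (0:ℝ) < u := hu
    dsimp only
    have hc : b / (b/u) = u := by field_simp
    rw [hc]
    have : b/u - u = -(u - b/u) := by ring
    rw [this, neg_sq]
  rw [hsplit, hsub] at key
  linarith
end

section
variable {b : ℝ}

lemma K_pointwise (hb : 0 < b) {u : ℝ} (hu : 0 < u) :
    Real.exp (-(u^2 + b^2/u^2)) = Real.exp (-(2*b)) * Real.exp (-(u - b/u)^2) := by
  rw [← Real.exp_add]
  congr 1
  have h1 : (u - b/u)^2 = u^2 - 2*b + b^2/u^2 := by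
    field_simp; ring
  rw [h1]; ring

lemma K_integrable (hb : 0 < b) :
    IntegrableOn (fun u => Real.exp (-(u^2 + b^2/u^2))) (Ioi (0:ℝ)) := by
  refine IntegrableOn.congr_fun ((glasser_integrable hb).const_mul (Real.exp (-(2*b)))) ?_
    measurableSet_Ioi
  intro u hu
  exact (K_pointwise hb hu).symm

lemma K_value (hb : 0 < b) :
    ∫ u in Ioi (0:ℝ), Real.exp (-(u^2 + b^2/u^2))
      = Real.sqrt π / 2 * Real.exp (-(2*b)) := by
  have : ∫ u in Ioi (0:ℝ), Real.exp (-(u^2 + b^2/u^2))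
      = ∫ u in Ioi (0:ℝ), Real.exp (-(2*b)) * Real.exp (-(u - b/u)^2) :=
    setIntegral_congr_fun measurableSet_Ioi (fun u hu => K_pointwise hb hu)
  rw [this, integral_const_mul, glasser hb]
  ring

lemma J_fun_eq (hb : 0 < b) {u : ℝ} (hu : 0 < u) :
    (b/u^2) * (b * Real.exp (-((b/u)^2 + b^2/(b/u)^2)))
      = b^2/u^2 * Real.exp (-(u^2 + b^2/u^2)) := by
  have h1 : b^2/(b/u)^2 = u^2 := by
    rw [div_pow]; field_simp
  have h2 : (b/u)^2 = b^2/u^2 := by rw [div_pow]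
  rw [h1, h2]
  ring_nf

lemma J_integrable (hb : 0 < b) :
    IntegrableOn (fun u => b^2/u^2 * Real.exp (-(u^2 + b^2/u^2))) (Ioi (0:ℝ)) := by
  have := (inv_subst_integrable hb
    (fun u => b * Real.exp (-(u^2 + b^2/u^2)))).1 ((K_integrable hb).const_mul b)
  refine this.congr_fun ?_ measurableSet_Ioi
  intro u hu
  exact (J_fun_eq hb hu)

lemma J_value (hb : 0 < b) :
    ∫ u in Ioi (0:ℝ), b^2/u^2 * Real.exp (-(u^2 + b^2/u^2))
      = b * (Real.sqrt π / 2 * Real.exp (-(2*b))) := by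
  have h := inv_subst hb (fun u => b * Real.exp (-(u^2 + b^2/u^2)))
  have h2 : ∫ u in Ioi (0:ℝ), b^2/u^2 * Real.exp (-(u^2 + b^2/u^2))
      = ∫ u in Ioi (0:ℝ), (b/u^2) * (b * Real.exp (-((b/u)^2 + b^2/(b/u)^2))) :=
    setIntegral_congr_fun measurableSet_Ioi (fun u hu => (J_fun_eq hb hu).symm)
  rw [h2, h, integral_const_mul, K_value hb]
end

section
variable {c : ℝ}

lemma w_integrable (hc : 0 < c) {T : ℝ} (hT : 0 ≤ T) :
    IntegrableOn (fun t => c^2 * t * Real.exp (-(c*t))) (Ioi T) := by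
  have hbig : IntegrableOn (fun t : ℝ => 2*c * Real.exp (-(c/2)*t)) (Ioi T) :=
    (exp_neg_integrableOn_Ioi T (by linarith)).const_mul _
  refine hbig.mono' ?_ ?_
  · exact (Continuous.aestronglyMeasurable (by continuity)).restrict
  · filter_upwards [ae_restrict_mem measurableSet_Ioi] with t ht
    have ht0 : (0:ℝ) < t := lt_of_le_of_lt hT ht
    rw [Real.norm_eq_abs, abs_of_nonneg (by positivity)]
    have key : c/2 * t * Real.exp (-(c/2 * t)) ≤ 1 := by
      have h := Real.add_one_le_exp (c/2 * t)
      have hp : (0:ℝ) < c/2 * t := by positivity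
      have h2 : c/2*t ≤ Real.exp (c/2*t) := by linarith
      rw [Real.exp_neg]
      rw [mul_inv_le_iff₀ (Real.exp_pos _)]
      simpa using h2
    have hsplit : c^2 * t * Real.exp (-(c*t))
        = 2*c * ((c/2 * t) * Real.exp (-(c/2*t))) * Real.exp (-(c/2)*t) := by
      have he : Real.exp (-(c*t)) = Real.exp (-(c/2*t)) * Real.exp (-(c/2)*t) := by
        rw [← Real.exp_add]; ring_nf
      rw [he]; ring
    rw [hsplit]
    have he : (0:ℝ) < Real.exp (-(c/2)*t) := Real.exp_pos _
    have h2c : (0:ℝ) < 2*c := by linarith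
    calc 2*c * ((c/2 * t) * Real.exp (-(c/2*t))) * Real.exp (-(c/2)*t)
        ≤ 2*c * 1 * Real.exp (-(c/2)*t) := by
          apply mul_le_mul_of_nonneg_right _ he.le
          exact mul_le_mul_of_nonneg_left key h2c.le
      _ = 2*c * Real.exp (-(c/2)*t) := by ring

lemma w_value (hc : 0 < c) {T : ℝ} (hT : 0 ≤ T) :
    ∫ t in Ioi T, c^2 * t * Real.exp (-(c*t)) = (1 + c*T) * Real.exp (-(c*T)) := by
  have hderiv : ∀ t ∈ Ioi T, HasDerivAt (fun t => -((c*t+1) * Real.exp (-(c*t))))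
      (c^2 * t * Real.exp (-(c*t))) t := by
    intro t _
    have h1 : HasDerivAt (fun t : ℝ => c*t+1) c t := by
      simpa using ((hasDerivAt_id t).const_mul c).add_const 1
    have h2 : HasDerivAt (fun t : ℝ => Real.exp (-(c*t))) (-c * Real.exp (-(c*t))) t := by
      have h3 : HasDerivAt (fun t : ℝ => -(c*t)) (-c) t := by
        exact ((hasDerivAt_id' t).const_mul c).neg.congr_deriv (by ring)
      refine ((Real.hasDerivAt_exp (-(c*t))).comp t h3).congr_deriv ?_
      ring
    have := (h1.mul h2).neg
    refine this.congr_deriv ?_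
    ring
  have htend : Filter.Tendsto (fun t => -((c*t+1) * Real.exp (-(c*t)))) Filter.atTop (nhds 0) := by
    have h1 : Filter.Tendsto (fun x : ℝ => (x+1) * Real.exp (-x)) Filter.atTop (nhds 0) := by
      have ha : Filter.Tendsto (fun x : ℝ => x * Real.exp (-x)) Filter.atTop (nhds 0) := by
        simpa using Real.tendsto_pow_mul_exp_neg_atTop_nhds_zero 1
      have hb : Filter.Tendsto (fun x : ℝ => Real.exp (-x)) Filter.atTop (nhds 0) := by
        simpa using Real.tendsto_exp_neg_atTop_nhds_zero
      have := ha.add hb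
      simpa [add_mul] using this
    have h2 : Filter.Tendsto (fun t : ℝ => c*t) Filter.atTop Filter.atTop :=
      Filter.Tendsto.const_mul_atTop hc Filter.tendsto_id
    have := (h1.comp h2).neg
    simpa using this
  have hcont : ContinuousWithinAt (fun t => -((c*t+1) * Real.exp (-(c*t)))) (Ici T) T :=
    (Continuous.continuousWithinAt (by continuity))
  have := integral_Ioi_of_hasDerivAt_of_tendsto hcont hderiv (w_integrable hc hT) htend
  rw [this]
  ring_nf
end



/-- auxiliary integrand for the Fubini argument -/
noncomputable def Paux (a c : ℝ) : ℝ → ℝ → ℝ := fun t u =>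
  if a / Real.sqrt t < u then (c^2 * t * Real.exp (-(c*t))) * Real.exp (-u^2) else 0

lemma Paux_meas {a c : ℝ} : AEStronglyMeasurable (Function.uncurry (Paux a c))
    (((volume : Measure ℝ).restrict (Set.Ioi 0)).prod
      ((volume : Measure ℝ).restrict (Set.Ioi 0))) := by
  have hS : MeasurableSet {p : ℝ × ℝ | a / Real.sqrt p.1 < p.2} := by
    apply measurableSet_lt
    · exact (measurable_const.div ((Real.continuous_sqrt.measurable).comp measurable_fst))
    · exact measurable_snd
  have hwc : Continuous (fun t : ℝ => c^2 * t * Real.exp (-(c*t))) := by continuity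
  have hexpc : Continuous (fun u : ℝ => Real.exp (-u^2)) := by continuity
  have hf : Measurable (fun p : ℝ × ℝ => (c^2 * p.1 * Real.exp (-(c*p.1))) * Real.exp (-p.2^2)) :=
    (hwc.measurable.comp measurable_fst).mul (hexpc.measurable.comp measurable_snd)
  have heq : Function.uncurry (Paux a c) = Set.indicator {p : ℝ × ℝ | a / Real.sqrt p.1 < p.2}
      (fun p => (c^2 * p.1 * Real.exp (-(c*p.1))) * Real.exp (-p.2^2)) := by
    ext p
    simp only [Function.uncurry, Paux, Set.indicator_apply, Set.mem_setOf_eq]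
  rw [heq]
  exact (hf.indicator hS).aestronglyMeasurable

lemma Paux_int {a c : ℝ} (hc : 0 < c) : Integrable (Function.uncurry (Paux a c))
    (((volume : Measure ℝ).restrict (Set.Ioi 0)).prod
      ((volume : Measure ℝ).restrict (Set.Ioi 0))) := by
  have hdom : Integrable (fun p : ℝ × ℝ => (c^2 * p.1 * Real.exp (-(c*p.1))) * Real.exp (-p.2^2))
      (((volume : Measure ℝ).restrict (Set.Ioi 0)).prod
        ((volume : Measure ℝ).restrict (Set.Ioi 0))) :=
    Integrable.mul_prod (w_integrable hc le_rfl) gauss_int.integrableOn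
  refine hdom.mono Paux_meas (Filter.Eventually.of_forall fun p => ?_)
  show ‖Paux a c p.1 p.2‖ ≤ _
  rw [Paux]
  split_ifs with h
  · exact le_rfl
  · rw [norm_zero]; exact norm_nonneg _

lemma main_aux {a c b : ℝ} (ha : 0 < a) (hc : 0 < c) (hb_def : b = a * Real.sqrt c) :
    (∫ t in Set.Ioi (0:ℝ),
        (2 / Real.sqrt π) * (∫ u in Set.Ioi (a / Real.sqrt t), Real.exp (-u^2))
          * (c^2 * t * Real.exp (-(c*t))))
      = (1 + b) * Real.exp (-(2*b)) := by
  have hb : 0 < b := by rw [hb_def]; positivity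
  have hb2 : b^2 = c * a^2 := by
    rw [hb_def, mul_pow, Real.sq_sqrt hc.le]; ring
  have step1 : (∫ t in Set.Ioi (0:ℝ),
      (2 / Real.sqrt π) * (∫ u in Set.Ioi (a / Real.sqrt t), Real.exp (-u^2))
        * (c^2 * t * Real.exp (-(c*t))))
      = (2 / Real.sqrt π) * ∫ t in Set.Ioi (0:ℝ), ∫ u in Set.Ioi (0:ℝ), Paux a c t u := by
    rw [← integral_const_mul]
    apply setIntegral_congr_fun measurableSet_Ioi
    intro t ht
    have ht0 : (0:ℝ) < t := ht
    have hst : 0 < Real.sqrt t := Real.sqrt_pos.2 ht0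
    have hc0 : 0 < a / Real.sqrt t := div_pos ha hst
    have h1 : (fun u => Paux a c t u)
        = Set.indicator (Set.Ioi (a / Real.sqrt t))
            (fun u => (c^2 * t * Real.exp (-(c*t))) * Real.exp (-u^2)) := by
      funext u
      rw [Set.indicator_apply, Paux]
      by_cases h : a / Real.sqrt t < u
      · rw [if_pos h, if_pos (Set.mem_Ioi.2 h)]
      · rw [if_neg h, if_neg (fun hmem => h (Set.mem_Ioi.1 hmem))]
    have hind : (∫ u in Set.Ioi (0:ℝ), Paux a c t u)
        = (c^2 * t * Real.exp (-(c*t))) * ∫ u in Set.Ioi (a / Real.sqrt t), Real.exp (-u^2) := by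
      rw [h1, setIntegral_indicator measurableSet_Ioi, Set.Ioi_inter_Ioi,
        sup_eq_right.2 hc0.le, integral_const_mul]
    dsimp only
    rw [hind]
    ring
  have step2 : (∫ t in Set.Ioi (0:ℝ), ∫ u in Set.Ioi (0:ℝ), Paux a c t u)
      = ∫ u in Set.Ioi (0:ℝ), ∫ t in Set.Ioi (0:ℝ), Paux a c t u :=
    integral_integral_swap (Paux_int hc)
  have step3 : ∀ u ∈ Set.Ioi (0:ℝ), (∫ t in Set.Ioi (0:ℝ), Paux a c t u)
      = Real.exp (-(u^2 + b^2/u^2)) + b^2/u^2 * Real.exp (-(u^2 + b^2/u^2)) := by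
    intro u hu
    have hu0 : (0:ℝ) < u := hu
    have hT0 : 0 < (a/u)^2 := by positivity
    have h1 : ∀ t ∈ Set.Ioi (0:ℝ),
        Paux a c t u = Set.indicator (Set.Ioi ((a/u)^2))
          (fun t => (c^2 * t * Real.exp (-(c*t))) * Real.exp (-u^2)) t := by
      intro t ht
      have ht0 : (0:ℝ) < t := ht
      have hst : 0 < Real.sqrt t := Real.sqrt_pos.2 ht0
      have hiff : a / Real.sqrt t < u ↔ (a/u)^2 < t := by
        rw [div_lt_iff₀ hst]
        constructor
        · intro h
          have h2 : a / u < Real.sqrt t := by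
            rw [div_lt_iff₀ hu0]; linarith [mul_comm u (Real.sqrt t)]
          exact (Real.lt_sqrt (by positivity : (0:ℝ) ≤ a/u)).1 h2
        · intro h
          have h2 : a / u < Real.sqrt t := (Real.lt_sqrt (by positivity : (0:ℝ) ≤ a/u)).2 h
          rw [div_lt_iff₀ hu0] at h2
          linarith [mul_comm u (Real.sqrt t)]
      rw [Set.indicator_apply, Paux]
      by_cases h : a / Real.sqrt t < u
      · rw [if_pos h, if_pos (Set.mem_Ioi.2 (hiff.1 h))]
      · rw [if_neg h, if_neg (fun hmem => h (hiff.2 (Set.mem_Ioi.1 hmem)))]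
    rw [setIntegral_congr_fun measurableSet_Ioi h1,
      setIntegral_indicator measurableSet_Ioi, Set.Ioi_inter_Ioi,
      sup_eq_right.2 hT0.le, integral_mul_const, w_value hc hT0.le]
    have hcT : c * (a/u)^2 = b^2/u^2 := by
      rw [div_pow, hb2]; ring
    rw [hcT]
    have hee : Real.exp (-(b^2/u^2)) * Real.exp (-u^2) = Real.exp (-(u^2 + b^2/u^2)) := by
      rw [← Real.exp_add]; ring_nf
    calc (1 + b^2/u^2) * Real.exp (-(b^2/u^2)) * Real.exp (-u^2)
        = (1 + b^2/u^2) * (Real.exp (-(b^2/u^2)) * Real.exp (-u^2)) := by ring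
      _ = (1 + b^2/u^2) * Real.exp (-(u^2 + b^2/u^2)) := by rw [hee]
      _ = _ := by ring
  have step4 : (∫ u in Set.Ioi (0:ℝ), ∫ t in Set.Ioi (0:ℝ), Paux a c t u)
      = (1 + b) * (Real.sqrt π / 2 * Real.exp (-(2*b))) := by
    rw [setIntegral_congr_fun measurableSet_Ioi step3,
      integral_add (K_integrable hb) (J_integrable hb), K_value hb, J_value hb]
    ring
  rw [step1, step2, step4]
  have hspi : (0:ℝ) < Real.sqrt π := Real.sqrt_pos.2 Real.pi_pos
  field_simp

end AuxLemmas

/-- The complementary error function. -/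
noncomputable def erfc (z : ℝ) : ℝ :=
  (2 / Real.sqrt π) * ∫ u in Set.Ioi z, Real.exp (-u ^ 2)

theorem gamma_reset_success_prob (L D r : ℝ) (hL : 0 < L) (hD : 0 < D) (hr : 0 < r) :
    (∫ t in Set.Ioi (0 : ℝ),
        erfc (Real.sqrt (L ^ 2 / (4 * D * t))) * (4 * r ^ 2 * t * Real.exp (-2 * r * t))) =
      Real.exp (-Real.sqrt (2 * r * L ^ 2 / D)) * (1 + Real.sqrt (r * L ^ 2 / (2 * D))) := by
  have hsD : (0:ℝ) < Real.sqrt D := Real.sqrt_pos.2 hD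
  have ha : (0:ℝ) < L / (2 * Real.sqrt D) := by positivity
  have hc : (0:ℝ) < 2 * r := by positivity
  have hb : (0:ℝ) < L / (2 * Real.sqrt D) * Real.sqrt (2*r) := by positivity
  have ha2 : (L / (2 * Real.sqrt D))^2 = L^2 / (4*D) := by
    rw [div_pow, mul_pow, Real.sq_sqrt hD.le]
    norm_num
  have hb2 : (L / (2 * Real.sqrt D) * Real.sqrt (2*r))^2 = (2*r) * (L^2/(4*D)) := by
    rw [mul_pow, Real.sq_sqrt hc.le, ha2]; ring
  have key := main_aux (b := L / (2 * Real.sqrt D) * Real.sqrt (2*r)) ha hc rfl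
  have hLHS : (∫ t in Set.Ioi (0 : ℝ),
      erfc (Real.sqrt (L ^ 2 / (4 * D * t))) * (4 * r ^ 2 * t * Real.exp (-2 * r * t)))
      = ∫ t in Set.Ioi (0:ℝ),
        (2 / Real.sqrt π) * (∫ u in Set.Ioi ((L / (2 * Real.sqrt D)) / Real.sqrt t),
            Real.exp (-u^2)) * ((2*r)^2 * t * Real.exp (-((2*r)*t))) := by
    apply setIntegral_congr_fun measurableSet_Ioi
    intro t ht
    have ht0 : (0:ℝ) < t := ht
    have hst : (0:ℝ) < Real.sqrt t := Real.sqrt_pos.2 ht0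
    have harg : Real.sqrt (L^2 / (4*D*t)) = (L / (2 * Real.sqrt D)) / Real.sqrt t := by
      have h : L^2 / (4*D*t) = ((L / (2 * Real.sqrt D)) / Real.sqrt t)^2 := by
        rw [div_pow, Real.sq_sqrt ht0.le, ha2]
        field_simp
      rw [h, Real.sqrt_sq (by positivity)]
    dsimp only
    unfold erfc
    rw [harg]
    have hexp : Real.exp (-2 * r * t) = Real.exp (-(2*r*t)) := by ring_nf
    rw [hexp]
    ring
  rw [hLHS, key]
  have h2b : Real.sqrt (2*r*L^2/D) = 2 * (L / (2 * Real.sqrt D) * Real.sqrt (2*r)) := by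
    rw [show 2*r*L^2/D = (2 * (L / (2 * Real.sqrt D) * Real.sqrt (2*r)))^2 by
      rw [mul_pow, hb2]; field_simp; ring,
      Real.sqrt_sq (by positivity)]
  have hbb : Real.sqrt (r*L^2/(2*D)) = L / (2 * Real.sqrt D) * Real.sqrt (2*r) := by
    rw [show r*L^2/(2*D) = (L / (2 * Real.sqrt D) * Real.sqrt (2*r))^2 by
      rw [hb2]; field_simp; ring,
      Real.sqrt_sq hb.le]
  rw [h2b, hbb]
  ring
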